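/- Let g be a finite-dimensional real Lie algebra with inner product ⟨·,·⟩, and suppose g = b ⊕ u is an orthogonal direct sum where b is an abelian subalgebra, u is an abelian ideal, and ad_B is skew-symmetric for every B ∈ b. If the inner product is cyclic, then g is abelian. -/

import Mathlib

/-- If a finite-dimensional real Lie algebra with a cyclic inner product is an
orthogonal direct sum `g = b ⊕ u` with `b` an abelian subalgebra, `u` an abelian ideal, and
`ad_B` skew-symmetric for every `B ∈ b`, then `g` is abelian. -/
theorem flat_cyclic_is_abelian {L : Type*} [LieRing L] [LieAlgebra ℝ L]
    [FiniteDimensional ℝ L]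
    (B : L →ₗ[ℝ] L →ₗ[ℝ] ℝ)
    (hsymm : ∀ x y : L, B x y = B y x)
    (hpos : ∀ x : L, x ≠ 0 → 0 < B x x)
    (hcyc : ∀ X Y Z : L, B ⁅X, Y⁆ Z + B ⁅Y, Z⁆ X + B ⁅Z, X⁆ Y = 0)
    (b : LieSubalgebra ℝ L) (u : LieIdeal ℝ L)
    (hbab : ∀ x ∈ b, ∀ y ∈ b, ⁅x, y⁆ = (0 : L))
    (huab : ∀ x ∈ u, ∀ y ∈ u, ⁅x, y⁆ = (0 : L))
    (horth : ∀ x ∈ b, ∀ y ∈ u, B x y = 0)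
    (hcompl : IsCompl b.toSubmodule (LieSubmodule.toSubmodule u))
    (hskew : ∀ W ∈ b, ∀ X Y : L, B ⁅W, X⁆ Y = - B X ⁅W, Y⁆) :
    IsLieAbelian L := by
  have key : ∀ W ∈ b, ∀ U ∈ u, ⁅W, U⁆ = (0 : L) := by
    intro W hW U hU
    by_contra h
    set Z := ⁅W, U⁆ with hZdef
    have hZu : Z ∈ u := u.lie_mem hU
    have hc := hcyc W U Z
    have h1 : B ⁅U, Z⁆ W = 0 := by
      rw [huab U hU Z hZu]; simp
    have h2 : B ⁅Z, W⁆ U = B Z Z := by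
      have hzw : ⁅Z, W⁆ = -⁅W, Z⁆ := by rw [← lie_skew]
      rw [hzw, map_neg, LinearMap.neg_apply, hskew W hW Z U]
      simp [hZdef]
    rw [h1, h2, ← hZdef] at hc
    have := hpos Z h
    linarith
  constructor
  intro x y
  obtain ⟨xb, xu, hxb, hxu, hx⟩ :=
    Submodule.codisjoint_iff_exists_add_eq.mp hcompl.codisjoint x
  obtain ⟨yb, yu, hyb, hyu, hy⟩ :=
    Submodule.codisjoint_iff_exists_add_eq.mp hcompl.codisjoint y
  have h1 : ⁅xb, yb⁆ = (0 : L) := hbab xb hxb yb hyb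
  have h2 : ⁅xu, yu⁆ = (0 : L) := huab xu hxu yu hyu
  have h3 : ⁅xb, yu⁆ = (0 : L) := key xb hxb yu hyu
  have h4 : ⁅xu, yb⁆ = (0 : L) := by
    have := key yb hyb xu hxu
    rw [← lie_skew, this, neg_zero]
  rw [← hx, ← hy, add_lie, lie_add, lie_add, h1, h2, h3, h4]
  simp
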